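/- Let s ≥ 2 and let G be the graph obtained from the complete bipartite graph K_{s+2,s+2}, with parts A = {a1,…,a_{s+2}} and B = {b1,…,b_{s+2}}, by deleting the three edges a_{s+1}b_{s+1}, b_{s+1}a_{s+2} and a_{s+2}b_{s+2} (the edges of the path a_{s+1} b_{s+1} a_{s+2} b_{s+2} on four vertices). Then G is Hamilton-laceable: for every u ∈ A and every v ∈ B there exists a Hamiltonian path of G with ends u and v. -/

import Mathlib

set_option linter.unusedTactic false
set_option linter.unreachableTactic false
set_option linter.unnecessarySeqFocus false


/-!
`K_{p+2,p+2}` minus the edges of a path on four vertices is Hamilton-laceable.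
The two parts are `A = {a₁, …, a_{p+2}}` and `B = {b₁, …, b_{p+2}}`, realised as
`Sum.inl i` and `Sum.inr i` for `i : Fin (p + 2)` (so `a_k` is `Sum.inl ⟨k - 1, _⟩`),
and the deleted edges are those of the path `a_{p+1} b_{p+1} a_{p+2} b_{p+2}`.
-/

/-- `K_{p+2,p+2}` minus the edges of the path `a_{p+1} b_{p+1} a_{p+2} b_{p+2}`. -/
def bipartiteMinusPath (p : ℕ) : SimpleGraph (Fin (p + 2) ⊕ Fin (p + 2)) :=
  (completeBipartiteGraph (Fin (p + 2)) (Fin (p + 2))).deleteEdges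
    {s(Sum.inl ⟨p, by omega⟩, Sum.inr ⟨p, by omega⟩),
     s(Sum.inl ⟨p + 1, by omega⟩, Sum.inr ⟨p, by omega⟩),
     s(Sum.inl ⟨p + 1, by omega⟩, Sum.inr ⟨p + 1, by omega⟩)}

lemma bmp_adj (p : ℕ) (i j : ℕ) (hi : i < p + 2) (hj : j < p + 2)
    (h1 : ¬(i = p ∧ j = p)) (h2 : ¬(i = p + 1 ∧ j = p))
    (h3 : ¬(i = p + 1 ∧ j = p + 1)) :
    (bipartiteMinusPath p).Adj (Sum.inl ⟨i, hi⟩) (Sum.inr ⟨j, hj⟩) := by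
  simp only [bipartiteMinusPath, SimpleGraph.deleteEdges_adj, completeBipartiteGraph,
    Set.mem_insert_iff, Set.mem_singleton_iff, Sym2.eq, Sym2.rel_iff', Prod.mk.injEq,
    Prod.swap_prod_mk]
  refine ⟨by simp, ?_⟩
  push_neg
  simp only [Sum.inl.injEq, Sum.inr.injEq, Fin.mk.injEq]
  simp only [ne_eq, Sum.inr.injEq, Fin.mk.injEq, reduceCtorEq, false_implies, true_and,
    and_true, IsEmpty.forall_iff]
  omega

lemma bmp_build (p : ℕ) (u v : Fin (p + 2)) (x y : ℕ → ℕ)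
    (hxlt : ∀ t, t < p + 2 → x t < p + 2) (hylt : ∀ t, t < p + 2 → y t < p + 2)
    (hxinj : ∀ s t, s < p + 2 → t < p + 2 → x s = x t → s = t)
    (hyinj : ∀ s t, s < p + 2 → t < p + 2 → y s = y t → s = t)
    (hadj1 : ∀ t, t < p + 2 →
      ¬(x t = p ∧ y t = p) ∧ ¬(x t = p + 1 ∧ y t = p) ∧ ¬(x t = p + 1 ∧ y t = p + 1))
    (hadj2 : ∀ t, t + 1 < p + 2 →
      ¬(x (t+1) = p ∧ y t = p) ∧ ¬(x (t+1) = p + 1 ∧ y t = p) ∧ ¬(x (t+1) = p + 1 ∧ y t = p + 1))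
    (hu : x 0 = u.val) (hv : y (p + 1) = v.val) :
    ∃ w : (bipartiteMinusPath p).Walk (Sum.inl u) (Sum.inr v), w.IsHamiltonian := by
  set G := bipartiteMinusPath p with hG
  set g : ℕ → Fin (p+2) ⊕ Fin (p+2) := fun m =>
    if m % 2 = 0 then Sum.inl ⟨x (m / 2) % (p+2), Nat.mod_lt _ (by omega)⟩
    else Sum.inr ⟨y (m / 2) % (p+2), Nat.mod_lt _ (by omega)⟩ with hg
  have hadj : ∀ m, m + 1 < 2 * (p+2) → G.Adj (g m) (g (m + 1)) := by
    intro m hm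
    rcases Nat.even_or_odd m with ⟨t, ht⟩ | ⟨t, ht⟩
    · have h2 : m % 2 = 0 := by omega
      have h3 : (m + 1) % 2 = 1 := by omega
      have h4 : m / 2 = t := by omega
      have h5 : (m + 1) / 2 = t := by omega
      have htn : t < p + 2 := by omega
      have hx := hxlt t htn; have hy := hylt t htn
      have ex : x t % (p+2) = x t := Nat.mod_eq_of_lt hx
      have ey : y t % (p+2) = y t := Nat.mod_eq_of_lt hy
      obtain ⟨c1, c2, c3⟩ := hadj1 t htn
      simp only [hg, h2, h3, h4, h5, if_pos, if_neg, Nat.one_ne_zero, if_false]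
      exact bmp_adj p _ _ (by omega) (by omega) (by omega) (by omega) (by omega)
    · have h2 : m % 2 = 1 := by omega
      have h3 : (m + 1) % 2 = 0 := by omega
      have h4 : m / 2 = t := by omega
      have h5 : (m + 1) / 2 = t + 1 := by omega
      have htn : t + 1 < p + 2 := by omega
      have hx := hxlt (t+1) htn; have hy := hylt t (by omega)
      have ex : x (t+1) % (p+2) = x (t+1) := Nat.mod_eq_of_lt hx
      have ey : y t % (p+2) = y t := Nat.mod_eq_of_lt hy
      obtain ⟨c1, c2, c3⟩ := hadj2 t htn
      have h6 : G.Adj (g (m+1)) (g m) := by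
        simp only [hg, h2, h3, h4, h5, Nat.one_ne_zero, if_false, if_pos]
        exact bmp_adj p _ _ (by omega) (by omega) (by omega) (by omega) (by omega)
      exact h6.symm
  have key : ∀ k, k < 2 * (p+2) → ∃ w : G.Walk (g 0) (g k),
      w.support = (List.range (k + 1)).map g := by
    intro k
    induction k with
    | zero => intro _; exact ⟨SimpleGraph.Walk.nil, by simp [List.range_succ]⟩
    | succ k ih =>
      intro hk
      obtain ⟨w, hw⟩ := ih (by omega)
      refine ⟨w.concat (hadj k (by omega)), ?_⟩
      rw [SimpleGraph.Walk.support_concat, hw, List.range_succ]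
      simp [List.range_succ]
  obtain ⟨w, hw⟩ := key (2 * (p+2) - 1) (by omega)
  have h0 : g 0 = Sum.inl u := by
    simp only [hg]
    norm_num
    exact Fin.ext (by simp [hu, Nat.mod_eq_of_lt u.isLt])
  have h1 : g (2 * (p+2) - 1) = Sum.inr v := by
    have e2 : (2 * (p+2) - 1) % 2 = 1 := by omega
    have e3 : (2 * (p+2) - 1) / 2 = p + 1 := by omega
    simp only [hg, e2, e3, Nat.one_ne_zero, if_false]
    exact congrArg Sum.inr (Fin.ext (by simp [hv, Nat.mod_eq_of_lt v.isLt]))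
  have hnodup : ((List.range (2 * (p+2))).map g).Nodup := by
    refine List.Nodup.map_on ?_ List.nodup_range
    intro a ha b hb hab
    simp only [List.mem_range] at ha hb
    simp only [hg] at hab
    rcases Nat.even_or_odd a with ⟨s, hs⟩ | ⟨s, hs⟩ <;>
      rcases Nat.even_or_odd b with ⟨t, htt⟩ | ⟨t, htt⟩
    · have e1 : a % 2 = 0 := by omega
      have e2 : b % 2 = 0 := by omega
      have hx1 := hxlt (a/2) (by omega); have hx2 := hxlt (b/2) (by omega)
      simp only [e1, e2, if_pos, Sum.inl.injEq, Fin.mk.injEq,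
        Nat.mod_eq_of_lt hx1, Nat.mod_eq_of_lt hx2] at hab
      have := hxinj (a/2) (b/2) (by omega) (by omega) hab
      omega
    · have e1 : a % 2 = 0 := by omega
      have e2 : b % 2 = 1 := by omega
      simp only [e1, e2, Nat.one_ne_zero, if_false, if_pos, reduceCtorEq] at hab
    · have e1 : a % 2 = 1 := by omega
      have e2 : b % 2 = 0 := by omega
      simp only [e1, e2, Nat.one_ne_zero, if_false, if_pos, reduceCtorEq] at hab
    · have e1 : a % 2 = 1 := by omega
      have e2 : b % 2 = 1 := by omega
      have hy1 := hylt (a/2) (by omega); have hy2 := hylt (b/2) (by omega)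
      simp only [e1, e2, Nat.one_ne_zero, if_false, Sum.inr.injEq, Fin.mk.injEq,
        Nat.mod_eq_of_lt hy1, Nat.mod_eq_of_lt hy2] at hab
      have := hyinj (a/2) (b/2) (by omega) (by omega) hab
      omega
  have hmem : ∀ a : Fin (p+2) ⊕ Fin (p+2), a ∈ (List.range (2 * (p+2))).map g := by
    have hcard : ((List.range (2 * (p+2))).map g).toFinset = Finset.univ := by
      apply Finset.eq_univ_of_card
      rw [List.toFinset_card_of_nodup hnodup]
      simp [Fintype.card_sum]
      omega
    intro a
    rw [← List.mem_toFinset, hcard]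
    exact Finset.mem_univ a
  refine ⟨w.copy h0 h1, ?_⟩
  intro a
  rw [SimpleGraph.Walk.support_copy, hw]
  have : (2 * (p+2) - 1) + 1 = 2 * (p + 2) := by omega
  rw [this]
  exact @List.count_eq_one_of_mem _ instBEqOfDecidableEq _ _ _ hnodup (hmem a)

def swn (c a : ℕ) : ℕ := if a = 0 then c else if a = c then 0 else a

lemma bmp_build' (p : ℕ) (u v : Fin (p + 2)) (x y : ℕ → ℕ) (cu cv : ℕ)
    (hcu : cu < p) (hcv : cv < p)
    (hxlt : ∀ t, t < p + 2 → x t < p + 2) (hylt : ∀ t, t < p + 2 → y t < p + 2)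
    (hxinj : ∀ s t, s < p + 2 → t < p + 2 → x s = x t → s = t)
    (hyinj : ∀ s t, s < p + 2 → t < p + 2 → y s = y t → s = t)
    (hadj1 : ∀ t, t < p + 2 →
      ¬(x t = p ∧ y t = p) ∧ ¬(x t = p + 1 ∧ y t = p) ∧ ¬(x t = p + 1 ∧ y t = p + 1))
    (hadj2 : ∀ t, t + 1 < p + 2 →
      ¬(x (t+1) = p ∧ y t = p) ∧ ¬(x (t+1) = p + 1 ∧ y t = p) ∧ ¬(x (t+1) = p + 1 ∧ y t = p + 1))
    (hu : swn cu (x 0) = u.val) (hv : swn cv (y (p + 1)) = v.val) :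
    ∃ w : (bipartiteMinusPath p).Walk (Sum.inl u) (Sum.inr v), w.IsHamiltonian := by
  apply bmp_build p u v (fun t => swn cu (x t)) (fun t => swn cv (y t))
  · intro t ht; have := hxlt t ht; simp only [swn]; split_ifs <;> (try contradiction) <;> omega
  · intro t ht; have := hylt t ht; simp only [swn]; split_ifs <;> (try contradiction) <;> omega
  · intro s t hs ht h
    refine hxinj s t hs ht ?_
    simp only [swn] at h; split_ifs at h <;> (try contradiction) <;> omega
  · intro s t hs ht h
    refine hyinj s t hs ht ?_
    simp only [swn] at h; split_ifs at h <;> (try contradiction) <;> omega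
  · intro t ht; obtain ⟨c1, c2, c3⟩ := hadj1 t ht
    simp only [swn]; split_ifs <;> (try contradiction) <;> (try omega) <;> (refine ⟨?_, ?_, ?_⟩ <;> simp <;> omega)
  · intro t ht; obtain ⟨c1, c2, c3⟩ := hadj2 t ht
    simp only [swn]; split_ifs <;> (try contradiction) <;> (try omega) <;> (refine ⟨?_, ?_, ?_⟩ <;> simp <;> omega)
  · exact hu
  · exact hv

set_option maxHeartbeats 1000000 in
/-- For every `p ≥ 2` the graph `K_{p+2,p+2}` minus the edges of a path on four
vertices is Hamilton-laceable: any vertex of one part and any vertex of the other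
part are the ends of a Hamiltonian path. -/
theorem bipartiteMinusPath_hamiltonLaceable (p : ℕ) (hp : 2 ≤ p)
    (u v : Fin (p + 2)) :
    ∃ w : (bipartiteMinusPath p).Walk (Sum.inl u) (Sum.inr v),
      w.IsHamiltonian := by
  have hu2 : (u:ℕ) < p + 2 := u.isLt
  have hv2 : (v:ℕ) < p + 2 := v.isLt
  rcases (by omega : (u:ℕ) < p ∨ (u:ℕ) = p ∨ (u:ℕ) = p+1) with hu1 | hu1 | hu1 <;>
    rcases (by omega : (v:ℕ) < p ∨ (v:ℕ) = p ∨ (v:ℕ) = p+1) with hv1 | hv1 | hv1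
  · exact bmp_build' p u v
      (fun t => if t = 0 then 0 else if t = 1 then 1 else if t = 2 then p else if t = p+1 then p+1 else t-1)
      (fun t => if t = 0 then p else if t = 1 then p+1 else if t = 2 then 1 else if t = p+1 then 0 else t-1)
      (u:ℕ) (v:ℕ) (by omega) (by omega)
      (by intro t ht; split_ifs <;> (try contradiction) <;> omega) (by intro t ht; split_ifs <;> (try contradiction) <;> omega)
      (by intro s t hs ht h; split_ifs at h <;> (try contradiction) <;> omega) (by intro s t hs ht h; split_ifs at h <;> (try contradiction) <;> omega)
      (by intro t ht; split_ifs <;> (try contradiction) <;> (try omega) <;> (refine ⟨?_, ?_, ?_⟩ <;> simp <;> omega))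
      (by intro t ht; split_ifs <;> (try contradiction) <;> (try omega) <;> (refine ⟨?_, ?_, ?_⟩ <;> simp <;> omega))
      (by simp only [swn]; split_ifs <;> (try contradiction) <;> omega) (by simp only [swn]; split_ifs <;> (try contradiction) <;> omega)
  · exact bmp_build' p u v
      (fun t => if t = 0 then 0 else if t = 1 then p else if t = p then p+1 else if t = p+1 then 1 else t)
      (fun t => if t = 0 then p+1 else if t = 1 then 0 else if t = p then 1 else if t = p+1 then p else t)
      (u:ℕ) 0 (by omega) (by omega)
      (by intro t ht; split_ifs <;> (try contradiction) <;> omega) (by intro t ht; split_ifs <;> (try contradiction) <;> omega)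
      (by intro s t hs ht h; split_ifs at h <;> (try contradiction) <;> omega) (by intro s t hs ht h; split_ifs at h <;> (try contradiction) <;> omega)
      (by intro t ht; split_ifs <;> (try contradiction) <;> (try omega) <;> (refine ⟨?_, ?_, ?_⟩ <;> simp <;> omega))
      (by intro t ht; split_ifs <;> (try contradiction) <;> (try omega) <;> (refine ⟨?_, ?_, ?_⟩ <;> simp <;> omega))
      (by simp only [swn]; split_ifs <;> (try contradiction) <;> omega) (by simp only [swn]; split_ifs <;> (try contradiction) <;> omega)
  · exact bmp_build' p u v
      (fun t => if t = p then p+1 else if t = p+1 then p else t)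
      (fun t => if t = 0 then p else if t = p then 0 else if t = p+1 then p+1 else t)
      (u:ℕ) 0 (by omega) (by omega)
      (by intro t ht; split_ifs <;> (try contradiction) <;> omega) (by intro t ht; split_ifs <;> (try contradiction) <;> omega)
      (by intro s t hs ht h; split_ifs at h <;> (try contradiction) <;> omega) (by intro s t hs ht h; split_ifs at h <;> (try contradiction) <;> omega)
      (by intro t ht; split_ifs <;> (try contradiction) <;> (try omega) <;> (refine ⟨?_, ?_, ?_⟩ <;> simp <;> omega))
      (by intro t ht; split_ifs <;> (try contradiction) <;> (try omega) <;> (refine ⟨?_, ?_, ?_⟩ <;> simp <;> omega))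
      (by simp only [swn]; split_ifs <;> (try contradiction) <;> omega) (by simp only [swn]; split_ifs <;> (try contradiction) <;> omega)
  · exact bmp_build' p u v
      (fun t => if t = 0 then p else if t = p+1 then p+1 else t-1)
      (fun t => if t = 0 then p+1 else if t = 1 then p else if t = p+1 then 0 else t-1)
      0 (v:ℕ) (by omega) (by omega)
      (by intro t ht; split_ifs <;> (try contradiction) <;> omega) (by intro t ht; split_ifs <;> (try contradiction) <;> omega)
      (by intro s t hs ht h; split_ifs at h <;> (try contradiction) <;> omega) (by intro s t hs ht h; split_ifs at h <;> (try contradiction) <;> omega)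
      (by intro t ht; split_ifs <;> (try contradiction) <;> (try omega) <;> (refine ⟨?_, ?_, ?_⟩ <;> simp <;> omega))
      (by intro t ht; split_ifs <;> (try contradiction) <;> (try omega) <;> (refine ⟨?_, ?_, ?_⟩ <;> simp <;> omega))
      (by simp only [swn]; split_ifs <;> (try contradiction) <;> omega) (by simp only [swn]; split_ifs <;> (try contradiction) <;> omega)
  · exact bmp_build' p u v
      (fun t => if t = 0 then p else if t = 1 then 0 else if t = 2 then p+1 else if t = p+1 then 1 else t-1)
      (fun t => if t = 0 then p+1 else if t = p+1 then p else t-1)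
      0 0 (by omega) (by omega)
      (by intro t ht; split_ifs <;> (try contradiction) <;> omega) (by intro t ht; split_ifs <;> (try contradiction) <;> omega)
      (by intro s t hs ht h; split_ifs at h <;> (try contradiction) <;> omega) (by intro s t hs ht h; split_ifs at h <;> (try contradiction) <;> omega)
      (by intro t ht; split_ifs <;> (try contradiction) <;> (try omega) <;> (refine ⟨?_, ?_, ?_⟩ <;> simp <;> omega))
      (by intro t ht; split_ifs <;> (try contradiction) <;> (try omega) <;> (refine ⟨?_, ?_, ?_⟩ <;> simp <;> omega))
      (by simp only [swn]; split_ifs <;> (try contradiction) <;> omega) (by simp only [swn]; split_ifs <;> (try contradiction) <;> omega)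
  · exact bmp_build' p u v
      (fun t => if t = 0 then p else if t = 1 then p+1 else t-2)
      (fun t => if t = 0 then 0 else if t = 1 then 1 else if t = 2 then p else if t = p+1 then p+1 else t-1)
      0 0 (by omega) (by omega)
      (by intro t ht; split_ifs <;> (try contradiction) <;> omega) (by intro t ht; split_ifs <;> (try contradiction) <;> omega)
      (by intro s t hs ht h; split_ifs at h <;> (try contradiction) <;> omega) (by intro s t hs ht h; split_ifs at h <;> (try contradiction) <;> omega)
      (by intro t ht; split_ifs <;> (try contradiction) <;> (try omega) <;> (refine ⟨?_, ?_, ?_⟩ <;> simp <;> omega))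
      (by intro t ht; split_ifs <;> (try contradiction) <;> (try omega) <;> (refine ⟨?_, ?_, ?_⟩ <;> simp <;> omega))
      (by simp only [swn]; split_ifs <;> (try contradiction) <;> omega) (by simp only [swn]; split_ifs <;> (try contradiction) <;> omega)
  · exact bmp_build' p u v
      (fun t => if t = 0 then p+1 else if t = 1 then 0 else if t = 2 then 1 else if t = 3 then p else t-2)
      (fun t => if t = 0 then 1 else if t = 1 then p else if t = 2 then p+1 else if t = p+1 then 0 else t-1)
      0 (v:ℕ) (by omega) (by omega)
      (by intro t ht; split_ifs <;> (try contradiction) <;> omega) (by intro t ht; split_ifs <;> (try contradiction) <;> omega)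
      (by intro s t hs ht h; split_ifs at h <;> (try contradiction) <;> omega) (by intro s t hs ht h; split_ifs at h <;> (try contradiction) <;> omega)
      (by intro t ht; split_ifs <;> (try contradiction) <;> (try omega) <;> (refine ⟨?_, ?_, ?_⟩ <;> simp <;> omega))
      (by intro t ht; split_ifs <;> (try contradiction) <;> (try omega) <;> (refine ⟨?_, ?_, ?_⟩ <;> simp <;> omega))
      (by simp only [swn]; split_ifs <;> (try contradiction) <;> omega) (by simp only [swn]; split_ifs <;> (try contradiction) <;> omega)
  · exact bmp_build' p u v
      (fun t => if t = 0 then p+1 else if t = 1 then 0 else if t = 2 then p else t-2)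
      (fun t => if t = 0 then 0 else if t = 1 then p+1 else if t = p+1 then p else t-1)
      0 0 (by omega) (by omega)
      (by intro t ht; split_ifs <;> (try contradiction) <;> omega) (by intro t ht; split_ifs <;> (try contradiction) <;> omega)
      (by intro s t hs ht h; split_ifs at h <;> (try contradiction) <;> omega) (by intro s t hs ht h; split_ifs at h <;> (try contradiction) <;> omega)
      (by intro t ht; split_ifs <;> (try contradiction) <;> (try omega) <;> (refine ⟨?_, ?_, ?_⟩ <;> simp <;> omega))
      (by intro t ht; split_ifs <;> (try contradiction) <;> (try omega) <;> (refine ⟨?_, ?_, ?_⟩ <;> simp <;> omega))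
      (by simp only [swn]; split_ifs <;> (try contradiction) <;> omega) (by simp only [swn]; split_ifs <;> (try contradiction) <;> omega)
  · exact bmp_build' p u v
      (fun t => if t = 0 then p+1 else if t = p+1 then p else t-1)
      (fun t => if t = 0 then 0 else if t = 1 then p else if t = p+1 then p+1 else t-1)
      0 0 (by omega) (by omega)
      (by intro t ht; split_ifs <;> (try contradiction) <;> omega) (by intro t ht; split_ifs <;> (try contradiction) <;> omega)
      (by intro s t hs ht h; split_ifs at h <;> (try contradiction) <;> omega) (by intro s t hs ht h; split_ifs at h <;> (try contradiction) <;> omega)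
      (by intro t ht; split_ifs <;> (try contradiction) <;> (try omega) <;> (refine ⟨?_, ?_, ?_⟩ <;> simp <;> omega))
      (by intro t ht; split_ifs <;> (try contradiction) <;> (try omega) <;> (refine ⟨?_, ?_, ?_⟩ <;> simp <;> omega))
      (by simp only [swn]; split_ifs <;> (try contradiction) <;> omega) (by simp only [swn]; split_ifs <;> (try contradiction) <;> omega)
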